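/- Let σ be a magnetic form on 𝕋^{2N} encoded by smooth ℤ²-periodic functions a_1,…,a_N : ℝ² → ℝ. Then σ is non-resonant in period τ (i.e. for each j there is k_j ∈ ℤ with 2πk_j/τ < a_j(x) < 2π(k_j+1)/τ for all x ∈ ℝ²) if and only if there exists ε > 0 such that for every smooth loop γ : ℝ → ℝ^{2N} with γ(t+τ) − γ(t) a constant vector in ℤ^{2N}, and for every v ∈ ℝ^{2N}, one has |(F_σ^γ(τ) − Id)·v| ≥ ε·|v|. -/

import Mathlib

open Real Filter

noncomputable section

/-- Configuration space ℝ^{2N}: coordinate `(j, s)` is the `s`-th coordinate of the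
`j`-th particle, with the Euclidean norm. -/
abbrev Conf (N : ℕ) := EuclideanSpace ℝ (Fin N × Fin 2)

/-- The plane ℝ² with the Euclidean norm. -/
abbrev Plane := EuclideanSpace ℝ (Fin 2)

/-- The coordinates of the `j`-th particle. -/
def part {N : ℕ} (x : Conf N) (j : Fin N) : Plane := WithLp.toLp 2 (fun s => x (j, s))

/-- The lattice vector in ℝ^{2N} associated to `m ∈ ℤ^{2N}`. -/
def latVec {N : ℕ} (m : Fin N × Fin 2 → ℤ) : Conf N := WithLp.toLp 2 (fun i => (m i : ℝ))

/-- The lattice vector in ℝ² associated to `m ∈ ℤ²`. -/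
def latVec2 (m : Fin 2 → ℤ) : Plane := WithLp.toLp 2 (fun s => (m s : ℝ))

/-- A product magnetic form on 𝕋^{2N}, encoded by smooth ℤ²-periodic functions
`a j : ℝ² → ℝ`. -/
structure Magnetic (N : ℕ) where
  a : Fin N → Plane → ℝ
  smooth : ∀ j, ContDiff ℝ (⊤ : ℕ∞) (a j)
  periodic : ∀ j (x : Plane) (m : Fin 2 → ℤ), a j (x + latVec2 m) = a j x

/-- `σ` is non-resonant in period `τ`. -/
def Magnetic.NonResonant {N : ℕ} (σ : Magnetic N) (τ : ℝ) : Prop :=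
  ∀ j : Fin N, ∃ k : ℤ, ∀ x : Plane,
    2 * π * k / τ < σ.a j x ∧ σ.a j x < 2 * π * (k + 1) / τ

/-- The Lorentz force `Y_σ(x)·v`: block-diagonal action, the `j`-th 2×2 block being
`a_j(x_j)·J₀` with `J₀ = [[0,-1],[1,0]]`. -/
def lorentz {N : ℕ} (a : Fin N → Plane → ℝ) (x v : Conf N) : Conf N :=
  WithLp.toLp 2 (fun i => if i.2 = (0 : Fin 2) then -(a i.1 (part x i.1)) * v (i.1, 1)
           else (a i.1 (part x i.1)) * v (i.1, 0))

/-- A potential: smooth, τ-periodic in time and ℤ^{2N}-periodic in space. -/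
structure Potential (N : ℕ) (τ : ℝ) where
  V : ℝ → Conf N → ℝ
  smooth : ContDiff ℝ (⊤ : ℕ∞) (Function.uncurry V)
  periodic_t : ∀ t x, V (t + τ) x = V t x
  periodic_x : ∀ t (x : Conf N) (m : Fin N × Fin 2 → ℤ), V t (x + latVec m) = V t x

/-- A τ-periodic solution in class `h ∈ ℤ^{2N}` of
`γ'' = −Y_σ(γ)·γ' − ∇V_t(γ)`. -/
def IsSolution {N : ℕ} (σ : Magnetic N) {τ : ℝ} (P : Potential N τ)
    (h : Fin N × Fin 2 → ℤ) (γ : ℝ → Conf N) : Prop :=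
  ContDiff ℝ (⊤ : ℕ∞) γ ∧
  (∀ t, deriv (deriv γ) t =
    - lorentz σ.a (γ t) (deriv γ t) - gradient (P.V t) (γ t)) ∧
  (∀ t, γ (t + τ) = γ t + latVec h) ∧
  (∀ t, deriv γ (t + τ) = deriv γ t)

/-- Two solutions are identified iff they differ by a lattice translation. -/
def SameSol {N : ℕ} (γ₁ γ₂ : ℝ → Conf N) : Prop :=
  ∃ m : Fin N × Fin 2 → ℤ, ∀ t, γ₁ t = γ₂ t + latVec m

/-- Non-degeneracy of a τ-periodic solution: the only τ-periodic solution of the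
linearized equation is `ξ ≡ 0`. -/
def NonDegenerate {N : ℕ} (σ : Magnetic N) {τ : ℝ} (P : Potential N τ)
    (γ : ℝ → Conf N) : Prop :=
  ∀ ξ : ℝ → Conf N, ContDiff ℝ (⊤ : ℕ∞) ξ →
    (∀ t, deriv (deriv ξ) t =
      - fderiv ℝ (fun x => lorentz σ.a x (deriv γ t)) (γ t) (ξ t)
      - lorentz σ.a (γ t) (deriv ξ t)
      - fderiv ℝ (fun x => gradient (P.V t) x) (γ t) (ξ t)) →
    ξ τ = ξ 0 → deriv ξ τ = deriv ξ 0 → ∀ t, ξ t = 0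
open Matrix

/-- `b_j^γ(t) = ∫₀^t a_j(γ_j(s)) ds`. -/
def bgam {N : ℕ} (σ : Magnetic N) (γ : ℝ → Conf N) (j : Fin N) (t : ℝ) : ℝ :=
  ∫ s in (0:ℝ)..t, σ.a j (part (γ s) j)

/-- The rotation matrix `exp(θ·J₀) = [[cos θ, −sin θ],[sin θ, cos θ]]`. -/
def rotMat (θ : ℝ) : Matrix (Fin 2) (Fin 2) ℝ :=
  !![Real.cos θ, -Real.sin θ; Real.sin θ, Real.cos θ]

/-- `F_σ^γ(t)`: the block-diagonal matrix whose `j`-th 2×2 block is the rotation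
`exp(b_j^γ(t)·J₀)`. -/
def Fsol {N : ℕ} (σ : Magnetic N) (γ : ℝ → Conf N) (t : ℝ) :
    Matrix (Fin N × Fin 2) (Fin N × Fin 2) ℝ :=
  fun i k => if i.1 = k.1 then rotMat (bgam σ γ i.1 t) i.2 k.2 else 0

/-- `(F_σ^γ(τ) − Id)·v`, viewed as a vector of the Euclidean space ℝ^{2N}. -/
def FminusIdMulVec {N : ℕ} (σ : Magnetic N) (γ : ℝ → Conf N) (τ : ℝ) (v : Conf N) : Conf N :=
  (EuclideanSpace.equiv (Fin N × Fin 2) ℝ).symm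
    ((Fsol σ γ τ - 1).mulVec (EuclideanSpace.equiv (Fin N × Fin 2) ℝ v))

lemma apply_FminusId {N : ℕ} (σ : Magnetic N) (γ : ℝ → Conf N) (τ : ℝ) (v : Conf N)
    (j : Fin N) (s : Fin 2) :
    FminusIdMulVec σ γ τ v (j, s) =
      (rotMat (bgam σ γ j τ) s 0 - (if s = 0 then 1 else 0)) * v (j, 0)
      + (rotMat (bgam σ γ j τ) s 1 - (if s = 1 then 1 else 0)) * v (j, 1) := by
  show (Fsol σ γ τ - 1).mulVec (fun i => v i) (j, s) = _
  rw [Matrix.mulVec, dotProduct, Fintype.sum_prod_type]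
  rw [Finset.sum_eq_single j]
  · simp [Fin.sum_univ_two, Fsol, Matrix.sub_apply, Matrix.one_apply, Prod.ext_iff]
  · intro j' _ hj'
    apply Finset.sum_eq_zero
    intro s' _
    simp [Fsol, Matrix.sub_apply, Matrix.one_apply, Prod.ext_iff, Ne.symm hj', hj']
  · intro h; exact absurd (Finset.mem_univ j) h

lemma normsq_FminusId {N : ℕ} (σ : Magnetic N) (γ : ℝ → Conf N) (τ : ℝ) (v : Conf N) :
    ‖FminusIdMulVec σ γ τ v‖^2 =
      ∑ j : Fin N, (2 - 2 * Real.cos (bgam σ γ j τ)) * ((v (j,0))^2 + (v (j,1))^2) := by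
  rw [EuclideanSpace.norm_eq, Real.sq_sqrt (by positivity)]
  rw [Fintype.sum_prod_type]
  apply Finset.sum_congr rfl
  intro j _
  rw [Fin.sum_univ_two]
  rw [Real.norm_eq_abs, Real.norm_eq_abs, sq_abs, sq_abs,
    apply_FminusId, apply_FminusId]
  have h := Real.sin_sq_add_cos_sq (bgam σ γ j τ)
  simp only [rotMat, Matrix.cons_val', Matrix.cons_val_zero, Matrix.cons_val_one,
    Matrix.head_cons, Matrix.empty_val', Matrix.cons_val_fin_one, Matrix.head_fin_const,
    Matrix.of_apply]
  norm_num
  nlinarith [h]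

lemma cos_le_cos_of_band (k : ℤ) (c θ : ℝ) (hc0 : 0 ≤ c) (hcπ : c ≤ π)
    (h1 : 2 * π * k + c ≤ θ) (h2 : θ ≤ 2 * π * (k + 1) - c) :
    Real.cos θ ≤ Real.cos c := by
  have hθ : Real.cos θ = Real.cos (θ - 2 * π * k) := by
    have h' := Real.cos_add_int_mul_two_pi (θ - 2 * π * k) k
    rw [← h']; ring_nf
  rw [hθ]
  set φ := θ - 2 * π * k with hφ
  have hφ1 : c ≤ φ := by simp only [hφ]; linarith
  have hφ2 : φ ≤ 2 * π - c := by simp only [hφ]; push_cast; linarith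
  by_cases hπ : φ ≤ π
  · exact Real.cos_le_cos_of_nonneg_of_le_pi hc0 hπ hφ1
  · have : Real.cos φ = Real.cos (2 * π - φ) := by
      rw [Real.cos_two_pi_sub]
    rw [this]
    exact Real.cos_le_cos_of_nonneg_of_le_pi hc0 (by linarith) (by linarith)

lemma plane_reduce (f : Plane → ℝ) (hper : ∀ (x : Plane) (m : Fin 2 → ℤ), f (x + latVec2 m) = f x)
    (x : Plane) : ∃ y : Plane, (∀ s, y s ∈ Set.Icc (0:ℝ) 1) ∧ f y = f x := by
  set y : Plane := WithLp.toLp 2 (fun s => x s - ⌊x s⌋) with hy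
  refine ⟨y, fun s => ⟨by simp [hy, Int.floor_le], by
    have := Int.lt_floor_add_one (x s); simp only [hy]; linarith⟩, ?_⟩
  have hx : y + latVec2 (fun s => ⌊x s⌋) = x := by
    ext s
    show (x s - ⌊x s⌋) + (⌊x s⌋ : ℝ) = x s
    ring
  conv_rhs => rw [← hx, hper]

lemma uniform_gap (f : Plane → ℝ) (hf : Continuous f)
    (hper : ∀ (x : Plane) (m : Fin 2 → ℤ), f (x + latVec2 m) = f x)
    (L U : ℝ) (h : ∀ x, L < f x ∧ f x < U) :
    ∃ c > 0, ∀ x, L + c ≤ f x ∧ f x ≤ U - c := by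
  set g : (Fin 2 → ℝ) → ℝ := fun y => f ((WithLp.equiv 2 (Fin 2 → ℝ)).symm y) with hg
  have hgc : Continuous g := hf.comp (PiLp.continuous_toLp 2 (fun _ : Fin 2 => ℝ))
  set K : Set (Fin 2 → ℝ) := Set.univ.pi (fun _ => Set.Icc (0:ℝ) 1) with hKdef
  have hK : IsCompact K := isCompact_univ_pi (fun _ => isCompact_Icc)
  have hKne : K.Nonempty := ⟨fun _ => 0, fun s _ => ⟨le_refl 0, zero_le_one⟩⟩
  obtain ⟨y₀, hy₀K, hmin⟩ := hK.exists_isMinOn hKne hgc.continuousOn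
  obtain ⟨y₁, hy₁K, hmax⟩ := hK.exists_isMaxOn hKne hgc.continuousOn
  set c := min (g y₀ - L) (U - g y₁) with hc
  refine ⟨c, lt_min (sub_pos.2 (h ((WithLp.equiv 2 (Fin 2 → ℝ)).symm y₀)).1)
    (sub_pos.2 (h ((WithLp.equiv 2 (Fin 2 → ℝ)).symm y₁)).2), ?_⟩
  intro x
  obtain ⟨y, hyI, hyx⟩ := plane_reduce f hper x
  have hyK : (WithLp.equiv 2 (Fin 2 → ℝ)) y ∈ K := by
    intro s _; exact hyI s
  have hgy : g ((WithLp.equiv 2 (Fin 2 → ℝ)) y) = f y := by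
    simp [hg]
  have h1 : g y₀ ≤ g ((WithLp.equiv 2 (Fin 2 → ℝ)) y) := hmin hyK
  have h2 : g ((WithLp.equiv 2 (Fin 2 → ℝ)) y) ≤ g y₁ := hmax hyK
  rw [hgy] at h1 h2
  constructor
  · calc L + c ≤ L + (g y₀ - L) := by linarith [min_le_left (g y₀ - L) (U - g y₁)]
    _ = g y₀ := by ring
    _ ≤ f y := h1
    _ = f x := hyx
  · calc f x = f y := hyx.symm
    _ ≤ g y₁ := h2
    _ = U - (U - g y₁) := by ring
    _ ≤ U - c := by linarith [min_le_right (g y₀ - L) (U - g y₁)]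

lemma part_continuous {N : ℕ} (j : Fin N) : Continuous fun x : Conf N => part x j := by
  exact (PiLp.continuous_toLp 2 fun _ : Fin 2 => ℝ).comp
    (continuous_pi fun i => (continuous_apply ((j, i) : Fin N × Fin 2)).comp
      (PiLp.continuous_ofLp 2 fun _ : Fin N × Fin 2 => ℝ))

lemma bgam_bounds {N : ℕ} (σ : Magnetic N) {τ : ℝ} (hτ : 0 < τ) {γ : ℝ → Conf N}
    (hγ : ContDiff ℝ (⊤ : ℕ∞) γ) (j : Fin N) (k : ℤ) (c : ℝ)
    (hb : ∀ x, 2 * π * k / τ + c ≤ σ.a j x ∧ σ.a j x ≤ 2 * π * (k + 1) / τ - c) :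
    2 * π * k + c * τ ≤ bgam σ γ j τ ∧ bgam σ γ j τ ≤ 2 * π * (k + 1) - c * τ := by
  have hcont : Continuous fun s : ℝ => σ.a j (part (γ s) j) :=
    (σ.smooth j).continuous.comp ((part_continuous j).comp hγ.continuous)
  have hint : IntervalIntegrable (fun s : ℝ => σ.a j (part (γ s) j)) MeasureTheory.volume 0 τ :=
    hcont.intervalIntegrable 0 τ
  constructor
  · have h1 : ∫ s in (0:ℝ)..τ, (2 * π * k / τ + c) ≤ bgam σ γ j τ := by
      apply intervalIntegral.integral_mono_on hτ.le intervalIntegrable_const hint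
      intro x _; exact (hb _).1
    rw [intervalIntegral.integral_const, smul_eq_mul] at h1
    have heq : (τ - 0) * (2 * π * ↑k / τ + c) = 2 * π * k + c * τ := by
      field_simp <;> ring
    rw [heq] at h1; exact h1
  · have h1 : bgam σ γ j τ ≤ ∫ s in (0:ℝ)..τ, (2 * π * (k+1) / τ - c) := by
      apply intervalIntegral.integral_mono_on hτ.le hint intervalIntegrable_const
      intro x _; exact (hb _).2
    rw [intervalIntegral.integral_const, smul_eq_mul] at h1
    have heq : (τ - 0) * (2 * π * (↑k+1) / τ - c) = 2 * π * (k + 1) - c * τ := by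
      field_simp <;> ring
    rw [heq] at h1; exact h1

theorem nonresonant_iff_quantitative
    (N : ℕ) (τ : ℝ) (hτ : 0 < τ) (σ : Magnetic N) :
    σ.NonResonant τ ↔
    ∃ ε > (0:ℝ), ∀ γ : ℝ → Conf N, ContDiff ℝ (⊤ : ℕ∞) γ →
      (∃ h : Fin N × Fin 2 → ℤ, ∀ t, γ (t + τ) = γ t + latVec h) →
      ∀ v : Conf N, ε * ‖v‖ ≤ ‖FminusIdMulVec σ γ τ v‖ := by
  constructor
  · intro hNR
    have H : ∀ j : Fin N, ∃ k : ℤ, ∃ c : ℝ, 0 < c ∧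
        ∀ x, 2 * π * k / τ + c ≤ σ.a j x ∧ σ.a j x ≤ 2 * π * (k + 1) / τ - c := by
      intro j
      obtain ⟨k, hk⟩ := hNR j
      obtain ⟨c, hc, hcb⟩ := uniform_gap (σ.a j) (σ.smooth j).continuous (σ.periodic j)
        (2 * π * k / τ) (2 * π * (k + 1) / τ) hk
      exact ⟨k, c, hc, hcb⟩
    choose k c hc0 hcb using H
    have hcπ : ∀ j, c j * τ ≤ π := by
      intro j
      have h0 := hcb j (0 : Plane)
      have hdiff : 2 * π * ((k j : ℝ) + 1) / τ - 2 * π * (k j) / τ = 2 * π / τ := by ring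
      have h2c : 2 * c j ≤ 2 * π / τ := by linarith [h0.1, h0.2]
      rw [← le_div_iff₀ hτ]
      have h3 : 2 * π / τ = 2 * (π / τ) := by ring
      linarith [h2c, h3]
    rcases Nat.eq_zero_or_pos N with hN | hN
    · subst hN
      refine ⟨1, one_pos, fun γ _ _ v => ?_⟩
      have hv : ‖v‖ = 0 := by
        rw [EuclideanSpace.norm_eq]
        simp
      rw [hv, mul_zero]
      exact norm_nonneg _
    · haveI : Nonempty (Fin N) := ⟨⟨0, hN⟩⟩
      set D : Fin N → ℝ := fun j => 2 - 2 * Real.cos (c j * τ) with hD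
      have hDpos : ∀ j, 0 < D j := by
        intro j
        have h1 : Real.cos (c j * τ) < Real.cos 0 :=
          Real.cos_lt_cos_of_nonneg_of_le_pi (le_refl 0) (hcπ j)
            (mul_pos (hc0 j) hτ)
        rw [Real.cos_zero] at h1
        simp only [hD]; linarith
      set m := Finset.univ.inf' Finset.univ_nonempty D with hm
      have hmpos : 0 < m := by
        rw [hm, Finset.lt_inf'_iff]
        exact fun j _ => hDpos j
      refine ⟨Real.sqrt m, Real.sqrt_pos.2 hmpos, ?_⟩
      intro γ hγ _ v
      have key : (Real.sqrt m * ‖v‖)^2 ≤ ‖FminusIdMulVec σ γ τ v‖^2 := by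
        rw [mul_pow, Real.sq_sqrt hmpos.le, normsq_FminusId]
        have hnv : ‖v‖^2 = ∑ j : Fin N, ((v (j,0))^2 + (v (j,1))^2) := by
          rw [EuclideanSpace.norm_eq, Real.sq_sqrt (by positivity), Fintype.sum_prod_type]
          apply Finset.sum_congr rfl
          intro j _
          rw [Fin.sum_univ_two, Real.norm_eq_abs, Real.norm_eq_abs, sq_abs, sq_abs]
        rw [hnv, Finset.mul_sum]
        apply Finset.sum_le_sum
        intro j _
        have hb := bgam_bounds σ hτ hγ j (k j) (c j) (hcb j)
        have hcos : Real.cos (bgam σ γ j τ) ≤ Real.cos (c j * τ) :=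
          cos_le_cos_of_band (k j) (c j * τ) _ (mul_pos (hc0 j) hτ).le (hcπ j) hb.1 hb.2
        have hmle : m ≤ D j := Finset.inf'_le _ (Finset.mem_univ j)
        have hsq : (0:ℝ) ≤ (v (j,0))^2 + (v (j,1))^2 := by positivity
        have : m ≤ 2 - 2 * Real.cos (bgam σ γ j τ) := by
          simp only [hD] at hmle; linarith
        nlinarith [this, hsq]
      have h0 : 0 ≤ Real.sqrt m * ‖v‖ := by positivity
      have := Real.sqrt_le_sqrt key
      rwa [Real.sqrt_sq h0, Real.sqrt_sq (norm_nonneg _)] at this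
  · rintro ⟨ε, hε, hbound⟩
    by_contra hNR
    unfold Magnetic.NonResonant at hNR
    push_neg at hNR
    obtain ⟨j, hj⟩ := hNR
    set f := σ.a j with hf
    have hfc : Continuous f := (σ.smooth j).continuous
    have hz : ∃ (z : Plane) (kk : ℤ), f z = 2 * π * kk / τ := by
      set t₀ := f 0 with ht₀
      set k₀ : ℤ := ⌊t₀ * τ / (2 * π)⌋ with hk₀
      have h2π : (0:ℝ) < 2 * π := by positivity
      have h1 : (k₀:ℝ) ≤ t₀ * τ / (2 * π) := Int.floor_le _
      have h2 : t₀ * τ / (2 * π) < k₀ + 1 := Int.lt_floor_add_one _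
      have hlow : 2 * π * k₀ / τ ≤ t₀ := by
        rw [div_le_iff₀ hτ]
        rw [le_div_iff₀ h2π] at h1
        linarith
      have hhigh : t₀ < 2 * π * ((k₀:ℝ) + 1) / τ := by
        rw [lt_div_iff₀ hτ]
        rw [div_lt_iff₀ h2π] at h2
        linarith
      rcases eq_or_lt_of_le hlow with heq | hlt
      · exact ⟨0, k₀, heq.symm⟩
      · obtain ⟨y, hy⟩ := hj k₀
        rcases le_or_gt (f y) (2 * π * k₀ / τ) with hy1 | hy2
        · have hmem : (2 * π * (k₀:ℝ) / τ) ∈ Set.Icc (f y) (f 0) := ⟨hy1, hlow⟩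
          obtain ⟨z, hzz⟩ := intermediate_value_univ y 0 hfc hmem
          exact ⟨z, k₀, hzz.symm ▸ rfl⟩
        · have hy3 : 2 * π * ((k₀:ℝ) + 1) / τ ≤ f y := hy hy2
          have hmem : (2 * π * ((k₀:ℝ) + 1) / τ) ∈ Set.Icc (f 0) (f y) := ⟨hhigh.le, hy3⟩
          obtain ⟨z, hzz⟩ := intermediate_value_univ 0 y hfc hmem
          refine ⟨z, k₀ + 1, ?_⟩
          rw [hzz]; push_cast; ring
    obtain ⟨z, kk, hzk⟩ := hz
    set x₀ : Conf N := WithLp.toLp 2 (fun i : Fin N × Fin 2 => if i.1 = j then z i.2 else 0) with hx₀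
    have hpart : part x₀ j = z := by
      ext s
      simp [part, hx₀]
    set γ : ℝ → Conf N := fun _ => x₀ with hγdef
    have hγ : ContDiff ℝ (⊤:ℕ∞) γ := contDiff_const
    have hper : ∃ h : Fin N × Fin 2 → ℤ, ∀ t, γ (t + τ) = γ t + latVec h :=
      ⟨0, fun t => by
        ext i
        show x₀ i = x₀ i + ((0:ℤ):ℝ)
        norm_num⟩
    have hbg : bgam σ γ j τ = 2 * π * kk := by
      show (∫ s in (0:ℝ)..τ, σ.a j (part (γ s) j)) = _
      have hfun : ∀ s : ℝ, σ.a j (part (γ s) j) = 2 * π * kk / τ := by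
        intro s
        show σ.a j (part x₀ j) = _
        rw [hpart]; exact hzk
      rw [intervalIntegral.integral_congr (g := fun _ => 2 * π * (kk:ℝ) / τ)
        (fun s _ => hfun s)]
      rw [intervalIntegral.integral_const, smul_eq_mul]
      field_simp
      ring
    have hcos : Real.cos (bgam σ γ j τ) = 1 := by
      rw [hbg, show 2 * π * (kk:ℝ) = (kk:ℝ) * (2 * π) by ring, Real.cos_int_mul_two_pi]
    set v : Conf N := EuclideanSpace.single (j, (0:Fin 2)) (1:ℝ) with hv
    have hvn : ‖v‖ = 1 := by
      rw [hv, EuclideanSpace.norm_single]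
      norm_num
    have hw : ‖FminusIdMulVec σ γ τ v‖ = 0 := by
      have h2 : ‖FminusIdMulVec σ γ τ v‖^2 = 0 := by
        rw [normsq_FminusId]
        apply Finset.sum_eq_zero
        intro j' _
        by_cases hjj : j' = j
        · subst hjj
          rw [hcos]; ring
        · have h0 : v (j', (0:Fin 2)) = 0 := by
            rw [hv, EuclideanSpace.single_apply]
            simp [hjj]
          have h1 : v (j', (1:Fin 2)) = 0 := by
            rw [hv, EuclideanSpace.single_apply]
            simp [hjj]
          rw [h0, h1]; ring
      exact pow_eq_zero_iff two_ne_zero |>.mp h2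
    have hfin := hbound γ hγ hper v
    rw [hvn, hw, mul_one] at hfin
    exact absurd hfin (not_le.2 hε)
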